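/- Let G be a real symmetric positive definite n×n matrix, let λ_min be its smallest eigenvalue, and let G_min be its smallest diagonal entry. Then any nonzero integer vector a minimizing aᵀGa over all nonzero integer vectors satisfies ‖a‖ ≤ √(G_min/λ_min). -/

import Mathlib

open Matrix BigOperators

lemma rayleigh_lb {n : ℕ} (G : Matrix (Fin n) (Fin n) ℝ) (hG : G.IsHermitian)
    (lam : ℝ) (hlam : ∀ i, lam ≤ hG.eigenvalues i) (x : Fin n → ℝ) :
    lam * (x ⬝ᵥ x) ≤ x ⬝ᵥ G.mulVec x := by
  set U : Matrix (Fin n) (Fin n) ℝ := (hG.eigenvectorUnitary : Matrix (Fin n) (Fin n) ℝ) with hU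
  set y : Fin n → ℝ := (star U) *ᵥ x with hy
  have hUU : U * star U = 1 := (Unitary.mem_iff.mp hG.eigenvectorUnitary.2).2
  have hvm : x ᵥ* U = star U *ᵥ x := by
    have h : star U = Uᵀ := by
      simp only [star_eq_conjTranspose, conjTranspose]
      ext i j; simp
    rw [h, ← Matrix.vecMul_transpose, transpose_transpose]
  have h1 : x ⬝ᵥ G.mulVec x = y ⬝ᵥ (diagonal hG.eigenvalues) *ᵥ y := by
    have hd : (RCLike.ofReal ∘ hG.eigenvalues : Fin n → ℝ) = hG.eigenvalues := by
      ext i; simp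
    conv_lhs => rw [hG.spectral_theorem]
    simp only [Unitary.conjStarAlgAut_apply, ← hU, ← mulVec_mulVec, dotProduct_mulVec, hy, hvm, hd]
  have h2 : y ⬝ᵥ y = x ⬝ᵥ x := by
    conv_lhs => rw [hy]
    rw [dotProduct_mulVec, ← hvm, vecMul_vecMul, hUU, vecMul_one]
  rw [h1, ← h2]
  have h3 : y ⬝ᵥ (diagonal hG.eigenvalues) *ᵥ y = ∑ i, hG.eigenvalues i * y i ^ 2 := by
    simp [dotProduct, mulVec_diagonal]; ring_nf
    exact Finset.sum_congr rfl fun i _ => by ring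
  have h4 : y ⬝ᵥ y = ∑ i, y i ^ 2 := by simp [dotProduct, sq]
  rw [h3, h4, Finset.mul_sum]
  exact Finset.sum_le_sum fun i _ => mul_le_mul_of_nonneg_right (hlam i) (sq_nonneg _)

theorem stmt0 {n : ℕ} [NeZero n] (G : Matrix (Fin n) (Fin n) ℝ) (hG : G.PosDef)
    (lam : ℝ) (hlam : lam = ⨅ i, hG.1.eigenvalues i)
    (Gmin : ℝ) (hGmin : Gmin = ⨅ i, G i i)
    (a : Fin n → ℤ) (ha : a ≠ 0)
    (hmin : ∀ b : Fin n → ℤ, b ≠ 0 →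
      (fun i => (a i : ℝ)) ⬝ᵥ G.mulVec (fun i => (a i : ℝ)) ≤
      (fun i => (b i : ℝ)) ⬝ᵥ G.mulVec (fun i => (b i : ℝ))) :
    ∑ i, ((a i : ℝ)) ^ 2 ≤ Gmin / lam := by
  have hne : Nonempty (Fin n) := Fin.pos_iff_nonempty.mp (Nat.pos_of_ne_zero (NeZero.ne n))
  set x : Fin n → ℝ := fun i => (a i : ℝ) with hx
  have hlam_le : ∀ i, lam ≤ hG.1.eigenvalues i := fun i =>
    hlam ▸ ciInf_le (Set.Finite.bddBelow (Set.finite_range _)) i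
  have hlam_pos : 0 < lam := by
    obtain ⟨j, hj⟩ := Finite.exists_min hG.1.eigenvalues
    have : hG.1.eigenvalues j ≤ lam := hlam ▸ le_ciInf hj
    exact lt_of_lt_of_le (hG.eigenvalues_pos j) this
  have hQ1 : lam * (x ⬝ᵥ x) ≤ x ⬝ᵥ G.mulVec x := rayleigh_lb G hG.1 lam hlam_le x
  have hQ2 : x ⬝ᵥ G.mulVec x ≤ Gmin := by
    rw [hGmin]
    refine le_ciInf fun j => ?_
    have hb : (Pi.single j 1 : Fin n → ℤ) ≠ 0 := by
      intro h
      have := congrFun h j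
      simp at this
    have h := hmin (Pi.single j 1) hb
    have heq : (fun i => ((Pi.single j 1 : Fin n → ℤ) i : ℝ)) ⬝ᵥ
        G.mulVec (fun i => ((Pi.single j 1 : Fin n → ℤ) i : ℝ)) = G j j := by
      have : (fun i => ((Pi.single j 1 : Fin n → ℤ) i : ℝ)) = Pi.single j 1 := by
        ext i; by_cases hij : i = j <;> simp [Pi.single_apply, hij]
      rw [this]
      simp [dotProduct, mulVec, Pi.single_apply]
    rw [heq] at h
    exact h
  have hsum : x ⬝ᵥ x = ∑ i, (a i : ℝ) ^ 2 := by simp [dotProduct, hx, sq]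
  rw [← hsum, le_div_iff₀ hlam_pos, mul_comm]
  exact hQ1.trans hQ2
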